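/- Let * be a continuous t-norm and let φ, ξ be distance distributions. Define (φ ⇒ ξ) : [0,∞] → [0,1] by (φ ⇒ ξ)(t) = sup_{s<t} inf_{q>0} (φ(q) →* ξ(q+s)). Then φ ⇒ ξ is the residual of φ relative to ξ in the quantale of distance distributions: for every distance distribution ψ, φ ⊗ ψ ≤ ξ if and only if ψ ≤ φ ⇒ ξ. -/

import Mathlib

open unitInterval
open scoped ENNReal

noncomputable section

instance : Fact ((0:ℝ) ≤ 1) := ⟨zero_le_one⟩

/-- A distance distribution: a map `φ : [0,∞] → [0,1]` with `φ t = ⨆ s < t, φ s`. -/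
def DistDistr (φ : ℝ≥0∞ → I) : Prop :=
  ∀ t, φ t = ⨆ (s : ℝ≥0∞) (_ : s < t), φ s

/-- The one-step function `κ_{p,a}`. -/
def kappa (p : ℝ≥0∞) (a : I) : ℝ≥0∞ → I :=
  fun t => if t ≤ p then 0 else a

/-- A continuous t-norm on `[0,1]`. -/
structure ContinuousTNorm where
  mul : I → I → I
  continuous' : Continuous fun p : I × I => mul p.1 p.2
  comm : ∀ a b, mul a b = mul b a
  assoc : ∀ a b c, mul (mul a b) c = mul a (mul b c)
  mono : ∀ a, Monotone (mul a)
  mul_one : ∀ a, mul a 1 = a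

/-- The residual `a →* b` of a continuous t-norm. -/
def ContinuousTNorm.residual (T : ContinuousTNorm) (a b : I) : I :=
  sSup {c | T.mul a c ≤ b}

/-- Convolution of maps `[0,∞] → [0,1]` w.r.t. a continuous t-norm. -/
def conv (T : ContinuousTNorm) (φ ψ : ℝ≥0∞ → I) : ℝ≥0∞ → I :=
  fun t => ⨆ (r : ℝ≥0∞) (s : ℝ≥0∞) (_ : r + s = t), T.mul (φ r) (ψ s)

/-- `φ⁻ t = ⨆ s < t, φ s`. -/
def lower (φ : ℝ≥0∞ → I) : ℝ≥0∞ → I :=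
  fun t => ⨆ (s : ℝ≥0∞) (_ : s < t), φ s

lemma TN.mul_bot (T : ContinuousTNorm) (a : I) : T.mul a ⊥ = ⊥ := by
  refine le_antisymm ?_ bot_le
  calc T.mul a ⊥ = T.mul ⊥ a := T.comm a ⊥
    _ ≤ T.mul ⊥ 1 := T.mono ⊥ le_one'
    _ = ⊥ := T.mul_one ⊥

lemma TN.adj (T : ContinuousTNorm) (a b c : I) :
    T.mul a c ≤ b ↔ c ≤ T.residual a b := by
  constructor
  · intro h; exact le_sSup h
  · intro h
    have hcont : ContinuousAt (T.mul a) (sSup {c | T.mul a c ≤ b}) :=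
      (T.continuous'.comp (Continuous.prodMk_right a)).continuousAt
    have key : T.mul a (T.residual a b) ≤ b := by
      rw [ContinuousTNorm.residual,
        (T.mono a).map_sSup_of_continuousAt hcont (TN.mul_bot T a)]
      apply sSup_le
      rintro x ⟨y, hy, rfl⟩
      exact hy
    exact le_trans (T.mono a h) key

lemma TN.residual_mono (T : ContinuousTNorm) (a : I) {b b' : I} (h : b ≤ b') :
    T.residual a b ≤ T.residual a b' :=
  sSup_le_sSup fun _ hc => le_trans hc h

lemma DistDistr.mono {φ : ℝ≥0∞ → I} (hφ : DistDistr φ) : Monotone φ := by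
  intro t t' htt'
  rw [hφ t, hφ t']
  exact iSup_le fun s => iSup_le fun hs =>
    le_iSup_of_le s (le_iSup_of_le (lt_of_lt_of_le hs htt') le_rfl)

lemma DistDistr.zero {φ : ℝ≥0∞ → I} (hφ : DistDistr φ) : φ 0 = ⊥ := by
  rw [hφ 0]
  exact le_antisymm (iSup_le fun s => iSup_le fun hs => absurd hs (by simp)) bot_le

/-- `(φ ⇒ ξ) t = ⨆ s < t, ⨅ q > 0, (φ q →* ξ (q + s))` is the residual
of `φ` relative to `ξ`: for every distance distribution `ψ`, `φ ⊗ ψ ≤ ξ ↔ ψ ≤ φ ⇒ ξ`. -/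
theorem stmt_11 (T : ContinuousTNorm) (φ ξ : ℝ≥0∞ → I) (hφ : DistDistr φ) (hξ : DistDistr ξ) :
    ∀ ψ : ℝ≥0∞ → I, DistDistr ψ →
      ((∀ t, conv T φ ψ t ≤ ξ t) ↔
        ∀ t, ψ t ≤ ⨆ (s : ℝ≥0∞) (_ : s < t), ⨅ (q : ℝ≥0∞) (_ : 0 < q),
          T.residual (φ q) (ξ (q + s))) := by
  intro ψ hψ
  constructor
  · intro h t
    rw [hψ t]
    refine iSup_le fun s => iSup_le fun hs => le_iSup_of_le s (le_iSup_of_le hs ?_)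
    refine le_iInf fun q => le_iInf fun _ => ?_
    rw [← TN.adj]
    refine le_trans ?_ (h (q + s))
    exact le_iSup_of_le q (le_iSup_of_le s (le_iSup_of_le rfl le_rfl))
  · intro h t
    refine iSup_le fun r => iSup_le fun s => iSup_le fun hrs => ?_
    rcases eq_or_lt_of_le (zero_le : (0:ℝ≥0∞) ≤ r) with hr | hr
    · rw [← hr, hφ.zero, T.comm, TN.mul_bot]
      exact bot_le
    · rw [TN.adj]
      refine le_trans (h s) ?_
      refine iSup_le fun s' => iSup_le fun hs' => ?_
      refine le_trans (iInf_le_of_le r (iInf_le_of_le hr le_rfl)) ?_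
      refine TN.residual_mono T _ (hξ.mono ?_)
      rw [← hrs]
      exact add_le_add le_rfl hs'.le
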